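/- Let P be a finite poset, k a field, and P' a convex full subposet of P. For a persistence module M over P', let M̂ denote its extension by zero to P. Then for every natural number n, M admits an interval resolution of length n over P' if and only if M̂ admits an interval resolution of length n over P; consequently the interval resolution dimension of M over P' equals the interval resolution dimension of M̂ over P. -/

import Mathlib

open CategoryTheory CategoryTheory.Limits

attribute [local instance] CategoryTheory.Limits.HasFiniteBiproducts.of_hasFiniteProducts

section Posets

variable {P : Type} [PartialOrder P]

/-- Zigzag connectivity of two elements of a subset `S` of a poset: they are linked by a
zigzag of comparable pairs inside `S`. -/
def ZigzagConnIn (S : Set P) (a b : S) : Prop :=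
  Relation.ReflTransGen (fun u v : S => (u : P) ≤ v ∨ (v : P) ≤ u) a b

/-- A subset of a poset is convex if `x ≤ z ≤ y` with `x, y` in the subset implies `z` is. -/
def IsConvex (S : Set P) : Prop :=
  ∀ ⦃x y z : P⦄, x ∈ S → y ∈ S → x ≤ z → z ≤ y → z ∈ S

/-- An interval of a poset: a nonempty, convex, zigzag-connected subset. -/
def IsIntervalSet (S : Set P) : Prop :=
  S.Nonempty ∧ IsConvex S ∧ ∀ a b : S, ZigzagConnIn S a b

end Posets

section IntervalModules

variable (k : Type) [Field k] {P : Type} [PartialOrder P]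

open Classical in
/-- The linear map between the fibers of the interval module. -/
noncomputable def intervalModuleAux (S : Set P) (p q : P) :
    ↥(if p ∈ S then (⊤ : Submodule k k) else ⊥) →ₗ[k]
      ↥(if q ∈ S then (⊤ : Submodule k k) else ⊥) where
  toFun x := ⟨(if p ∈ S ∧ q ∈ S then (1 : k) else 0) * x.1, by
    by_cases hq : q ∈ S
    · rw [if_pos hq]; exact Submodule.mem_top
    · have hp : ¬ (p ∈ S ∧ q ∈ S) := fun h => hq h.2
      rw [if_neg hp, zero_mul]; exact Submodule.zero_mem _⟩
  map_add' x y := by ext; simp [mul_add]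
  map_smul' c x := by ext; simp

open Classical in
/-- The interval module `k_S` associated to a convex subset `S` of a poset `P`:
it is `k` at points of `S`, `0` elsewhere, with identity structure maps inside `S`. -/
noncomputable def intervalModule (S : Set P) (hS : IsConvex S) : P ⥤ ModuleCat.{0} k where
  obj p := ModuleCat.of k ↥(if p ∈ S then (⊤ : Submodule k k) else ⊥)
  map {p q} _ := ModuleCat.ofHom (intervalModuleAux k S p q)
  map_id p := by
    apply ModuleCat.hom_ext
    apply LinearMap.ext
    rintro ⟨x, hx⟩
    apply Subtype.ext
    show (if p ∈ S ∧ p ∈ S then (1 : k) else 0) * x = x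
    by_cases hp : p ∈ S
    · simp [hp]
    · rw [if_neg hp] at hx
      simp [hp, (Submodule.mem_bot k).mp hx]
  map_comp {p q r} f g := by
    apply ModuleCat.hom_ext
    apply LinearMap.ext
    rintro ⟨x, hx⟩
    apply Subtype.ext
    show (if p ∈ S ∧ r ∈ S then (1 : k) else 0) * x
      = (if q ∈ S ∧ r ∈ S then (1 : k) else 0) * ((if p ∈ S ∧ q ∈ S then (1 : k) else 0) * x)
    by_cases hp : p ∈ S
    · by_cases hr : r ∈ S
      · have hq : q ∈ S := hS hp hr (leOfHom f) (leOfHom g)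
        simp [hp, hq, hr]
      · simp [hr]
    · rw [if_neg hp] at hx
      simp [(Submodule.mem_bot k).mp hx]

/-- A persistence module is an interval module if it is isomorphic to `k_S` for some
interval `S`. -/
def IsIntervalModule (M : P ⥤ ModuleCat.{0} k) : Prop :=
  ∃ (S : Set P) (hS : IsIntervalSet S), Nonempty (M ≅ intervalModule k S hS.2.1)

/-- A persistence module is interval-decomposable if it is isomorphic to a finite direct sum
of interval modules. -/
def IsIntervalDecomposable (M : P ⥤ ModuleCat.{0} k) : Prop :=
  ∃ (n : ℕ) (J : Fin n → (P ⥤ ModuleCat.{0} k)),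
    (∀ i, IsIntervalModule k (J i)) ∧ Nonempty (M ≅ ⨁ J)

/-- The support of a persistence module. -/
def moduleSupport (M : P ⥤ ModuleCat.{0} k) : Set P := {p : P | ¬ IsZero (M.obj p)}

/-- A persistence module valued in finite-dimensional vector spaces. -/
def PointwiseFinite (M : P ⥤ ModuleCat.{0} k) : Prop :=
  ∀ p : P, FiniteDimensional k (M.obj p)

end IntervalModules

section Approximations

variable {C : Type*} [Category C]

/-- `f : X ⟶ M` is a right `𝒳`-approximation of `M` if `X ∈ 𝒳` and every morphism
from an object of `𝒳` to `M` factors through `f`. -/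
def IsRightApproximation (𝒳 : C → Prop) {X M : C} (f : X ⟶ M) : Prop :=
  𝒳 X ∧ ∀ ⦃Y : C⦄ (g : Y ⟶ M), 𝒳 Y → ∃ h : Y ⟶ X, h ≫ f = g

/-- `f : X ⟶ M` is right minimal if every endomorphism `g` of `X` with `f ∘ g = f`
is an isomorphism. -/
def IsRightMinimal {X M : C} (f : X ⟶ M) : Prop :=
  ∀ g : X ⟶ X, g ≫ f = f → IsIso g

end Approximations

/-- An interval cover: a right minimal approximation by interval-decomposable modules. -/
def IsIntervalCover (k : Type) [Field k] {P : Type} [PartialOrder P]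
    {X M : P ⥤ ModuleCat.{0} k} (f : X ⟶ M) : Prop :=
  IsRightApproximation (IsIntervalDecomposable k) f ∧ IsRightMinimal f

section Resolutions

variable {C : Type*} [Category C] [Limits.HasZeroMorphisms C]

/-- `M` admits a resolution `0 ⟶ J_n ⟶ ⋯ ⟶ J_1 ⟶ J_0 ⟶ M ⟶ 0` of length `n` by objects
of `𝒳`: an exact sequence in which every `J_i` lies in `𝒳`.  (The data is encoded by an
`ℕ`-indexed complex which vanishes in degrees `> n` and is exact everywhere.) -/
def HasResolutionOfLength (𝒳 : C → Prop) (n : ℕ) (M : C) : Prop :=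
  ∃ (J : ℕ → C) (d : ∀ i, J (i + 1) ⟶ J i) (f : J 0 ⟶ M) (w0 : d 0 ≫ f = 0)
    (w : ∀ i, d (i + 1) ≫ d i = 0),
    (∀ i, i ≤ n → 𝒳 (J i)) ∧ (∀ i, n < i → IsZero (J i)) ∧
    Epi f ∧ (ShortComplex.mk (d 0) f w0).Exact ∧
    ∀ i, (ShortComplex.mk (d (i + 1)) (d i) (w i)).Exact

end Resolutions

section ExtensionByZero

variable (k : Type) [Field k] {P : Type} [PartialOrder P] (P' : Set P)

open Classical in
/-- Fibers of the extension by zero. -/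
noncomputable def extObj (M : ↥P' ⥤ ModuleCat.{0} k) (p : P) : ModuleCat.{0} k :=
  if h : p ∈ P' then M.obj ⟨p, h⟩ else ModuleCat.of k PUnit

lemma extObj_pos (M : ↥P' ⥤ ModuleCat.{0} k) {p : P} (hp : p ∈ P') :
    extObj k P' M p = M.obj ⟨p, hp⟩ := dif_pos hp

lemma extObj_isZero (M : ↥P' ⥤ ModuleCat.{0} k) {p : P} (hp : p ∉ P') :
    CategoryTheory.Limits.IsZero (extObj k P' M p) := by
  rw [extObj, dif_neg hp]
  exact ModuleCat.isZero_of_subsingleton _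

open Classical in
/-- Structure maps of the extension by zero. -/
noncomputable def extMap (M : ↥P' ⥤ ModuleCat.{0} k) (p q : P) (hpq : p ≤ q) :
    extObj k P' M p ⟶ extObj k P' M q :=
  if hp : p ∈ P' then
    if hq : q ∈ P' then
      eqToHom (extObj_pos k P' M hp) ≫
        M.map (homOfLE (show (⟨p, hp⟩ : ↥P') ≤ ⟨q, hq⟩ from hpq)) ≫
          eqToHom (extObj_pos k P' M hq).symm
    else 0
  else 0

lemma extMap_id (M : ↥P' ⥤ ModuleCat.{0} k) (p : P) (h : p ≤ p) :
    extMap k P' M p p h = 𝟙 (extObj k P' M p) := by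
  by_cases hp : p ∈ P'
  · simp only [extMap, dif_pos hp]
    have : homOfLE (show (⟨p, hp⟩ : ↥P') ≤ ⟨p, hp⟩ from h) = 𝟙 _ := Subsingleton.elim _ _
    rw [this, M.map_id]
    simp
  · simp only [extMap, dif_neg hp]
    exact (extObj_isZero k P' M hp).eq_of_src _ _

lemma extMap_comp (hconv : IsConvex P') (M : ↥P' ⥤ ModuleCat.{0} k) (p q r : P)
    (hpq : p ≤ q) (hqr : q ≤ r) :
    extMap k P' M p r (hpq.trans hqr) = extMap k P' M p q hpq ≫ extMap k P' M q r hqr := by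
  by_cases hp : p ∈ P'
  · by_cases hr : r ∈ P'
    · have hq : q ∈ P' := hconv hp hr hpq hqr
      simp only [extMap, dif_pos hp, dif_pos hq, dif_pos hr]
      have : homOfLE (show (⟨p, hp⟩ : ↥P') ≤ ⟨r, hr⟩ from hpq.trans hqr) =
          homOfLE (show (⟨p, hp⟩ : ↥P') ≤ ⟨q, hq⟩ from hpq) ≫
            homOfLE (show (⟨q, hq⟩ : ↥P') ≤ ⟨r, hr⟩ from hqr) := Subsingleton.elim _ _
      rw [this, M.map_comp]
      simp
    · by_cases hq : q ∈ P'
      · simp only [extMap, dif_pos hp, dif_pos hq, dif_neg hr]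
        simp
      · simp only [extMap, dif_pos hp, dif_neg hq, dif_neg hr]
        simp
  · simp only [extMap, dif_neg hp]
    exact (extObj_isZero k P' M hp).eq_of_src _ _

/-- The extension by zero of a persistence module over a convex full subposet `P'` of `P`:
it agrees with `M` on `P'` and vanishes outside of `P'`. -/
noncomputable def extendByZero (hconv : IsConvex P') (M : ↥P' ⥤ ModuleCat.{0} k) :
    P ⥤ ModuleCat.{0} k where
  obj p := extObj k P' M p
  map {p q} f := extMap k P' M p q (leOfHom f)
  map_id p := extMap_id k P' M p le_rfl
  map_comp {p q r} f g := extMap_comp k P' hconv M p q r (leOfHom f) (leOfHom g)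

open Classical in
/-- The components of the extension by zero of a morphism. -/
noncomputable def extHomApp {X M : ↥P' ⥤ ModuleCat.{0} k} (f : X ⟶ M) (p : P) :
    extObj k P' X p ⟶ extObj k P' M p :=
  if hp : p ∈ P' then
    eqToHom (extObj_pos k P' X hp) ≫ f.app ⟨p, hp⟩ ≫ eqToHom (extObj_pos k P' M hp).symm
  else 0

/-- The extension by zero of a morphism of persistence modules over a convex full
subposet. -/
noncomputable def extendByZeroHom (hconv : IsConvex P') {X M : ↥P' ⥤ ModuleCat.{0} k}
    (f : X ⟶ M) : extendByZero k P' hconv X ⟶ extendByZero k P' hconv M where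
  app p := extHomApp k P' f p
  naturality p q g := by
    show extMap k P' X p q (leOfHom g) ≫ extHomApp k P' f q =
      extHomApp k P' f p ≫ extMap k P' M p q (leOfHom g)
    by_cases hq : q ∈ P'
    · by_cases hp : p ∈ P'
      · simp only [extMap, extHomApp, dif_pos hp, dif_pos hq]
        simp only [CategoryTheory.Category.assoc, CategoryTheory.eqToHom_trans_assoc,
          CategoryTheory.eqToHom_refl, CategoryTheory.Category.id_comp]
        rw [CategoryTheory.NatTrans.naturality_assoc]
      · exact (extObj_isZero k P' X hp).eq_of_src _ _
    · exact ((extObj_isZero k P' M hq).eq_of_tgt _ _)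

end ExtensionByZero

section DecompAux

open CategoryTheory CategoryTheory.Limits

variable (k : Type) [Field k]

namespace IntervalProof

variable {Q : Type} [PartialOrder Q]

lemma intervalModule_congr {S₁ S₂ : Set Q} (h : S₁ = S₂) (h₁ : IsConvex S₁) (h₂ : IsConvex S₂) :
    intervalModule k S₁ h₁ = intervalModule k S₂ h₂ := by subst h; rfl

open Classical in
lemma intervalModule_obj_isZero {S : Set Q} (hS : IsConvex S) {q : Q} (hq : q ∉ S) :
    IsZero ((intervalModule k S hS).obj q) := by
  show IsZero (ModuleCat.of k ↥(if q ∈ S then (⊤ : Submodule k k) else ⊥))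
  rw [if_neg hq]
  exact ModuleCat.isZero_of_subsingleton _

open Classical in
/-- An "indicator" linear map between fibers of indicator modules. -/
noncomputable def indAux (A B : Prop) :
    ↥(if A then (⊤ : Submodule k k) else ⊥) →ₗ[k]
      ↥(if B then (⊤ : Submodule k k) else ⊥) where
  toFun x := ⟨(if B then (1 : k) else 0) * x.1, by
    by_cases hB : B
    · rw [if_pos hB, if_pos hB]; exact Submodule.mem_top
    · rw [if_neg hB, if_neg hB, zero_mul]; exact Submodule.zero_mem _⟩
  map_add' x y := by ext; simp [mul_add]
  map_smul' c x := by ext; simp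

end IntervalProof

end DecompAux

section DecompAux2

open CategoryTheory CategoryTheory.Limits

namespace IntervalProof

variable (k : Type) [Field k] {Q : Type} [PartialOrder Q]

open Classical in
/-- Projection from an indicator module to the indicator module of a "union of components"
subset. -/
noncomputable def indNat {U V : Set Q} (hU : IsConvex U) (hV : IsConvex V)
    (hVU : V ⊆ U)
    (hcomp : ∀ ⦃p q : Q⦄, p ≤ q → p ∈ U → q ∈ U → (p ∈ V ↔ q ∈ V)) :
    intervalModule k U hU ⟶ intervalModule k V hV where
  app q := ModuleCat.ofHom (indAux k (q ∈ U) (q ∈ V))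
  naturality p q f := by
    apply ModuleCat.hom_ext
    apply LinearMap.ext
    rintro ⟨x, hx⟩
    apply Subtype.ext
    show (if q ∈ V then (1:k) else 0) * ((if p ∈ U ∧ q ∈ U then (1:k) else 0) * x)
      = (if p ∈ V ∧ q ∈ V then (1:k) else 0) * ((if p ∈ V then (1:k) else 0) * x)
    by_cases hp : p ∈ U
    · by_cases hq : q ∈ U
      · by_cases hqv : q ∈ V
        · have hpv : p ∈ V := (hcomp (leOfHom f) hp hq).mpr hqv
          simp [hp, hq, hqv, hpv]
        · have hpv : p ∉ V := fun h => hqv ((hcomp (leOfHom f) hp hq).mp h)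
          simp [hqv, hpv]
      · have hqv : q ∉ V := fun h => hq (hVU h)
        simp [hqv]
    · rw [if_neg hp] at hx
      simp [(Submodule.mem_bot k).mp hx]

open Classical in
/-- Inclusion of the indicator module of a "union of components" subset. -/
noncomputable def indNat' {U V : Set Q} (hU : IsConvex U) (hV : IsConvex V)
    (hVU : V ⊆ U)
    (hcomp : ∀ ⦃p q : Q⦄, p ≤ q → p ∈ U → q ∈ U → (p ∈ V ↔ q ∈ V)) :
    intervalModule k V hV ⟶ intervalModule k U hU where
  app q := ModuleCat.ofHom (indAux k (q ∈ V) (q ∈ U))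
  naturality p q f := by
    apply ModuleCat.hom_ext
    apply LinearMap.ext
    rintro ⟨x, hx⟩
    apply Subtype.ext
    show (if q ∈ U then (1:k) else 0) * ((if p ∈ V ∧ q ∈ V then (1:k) else 0) * x)
      = (if p ∈ U ∧ q ∈ U then (1:k) else 0) * ((if p ∈ U then (1:k) else 0) * x)
    by_cases hp : p ∈ V
    · have hpu : p ∈ U := hVU hp
      by_cases hqv : q ∈ V
      · have hqu : q ∈ U := hVU hqv
        simp [hp, hpu, hqv, hqu]
      · by_cases hqu : q ∈ U
        · exact absurd ((hcomp (leOfHom f) hpu hqu).mp hp) hqv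
        · simp [hqu]
    · rw [if_neg hp] at hx
      simp [(Submodule.mem_bot k).mp hx]

variable {T : Set Q}

/-- The setoid of zigzag-connectivity on a subset `T`. -/
def compSetoid (T : Set Q) : Setoid ↥T :=
  ⟨ZigzagConnIn T,
    fun _ => Relation.ReflTransGen.refl,
    fun h => by
      unfold ZigzagConnIn at h ⊢
      induction h with
      | refl => exact Relation.ReflTransGen.refl
      | tail _ hbc ih => exact Relation.ReflTransGen.head hbc.symm ih,
    fun h h' => Relation.ReflTransGen.trans h h'⟩

/-- The zigzag-connected component of `T` indexed by `c`. -/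
def comp (T : Set Q) (c : Quotient (compSetoid T)) : Set Q :=
  {q | ∃ h : q ∈ T, Quotient.mk (compSetoid T) ⟨q, h⟩ = c}

lemma comp_subset {c} : comp T c ⊆ T := by
  rintro q ⟨h, -⟩; exact h

lemma mem_comp {q : Q} (h : q ∈ T) {c} :
    q ∈ comp T c ↔ Quotient.mk (compSetoid T) ⟨q, h⟩ = c :=
  ⟨fun ⟨_, e⟩ => e, fun e => ⟨h, e⟩⟩

lemma comp_convex (hT : IsConvex T) (c) : IsConvex (comp T c) := by
  rintro x y z ⟨hx, ex⟩ ⟨hy, _⟩ hxz hzy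
  have hz : z ∈ T := hT hx hy hxz hzy
  refine ⟨hz, ?_⟩
  rw [← ex]
  exact Quotient.sound (Relation.ReflTransGen.single (Or.inr hxz))

lemma comp_compat (c) : ∀ ⦃p q : Q⦄, p ≤ q → p ∈ T → q ∈ T →
    (p ∈ comp T c ↔ q ∈ comp T c) := by
  intro p q hpq hp hq
  rw [mem_comp hp, mem_comp hq]
  have : Quotient.mk (compSetoid T) ⟨p, hp⟩ = Quotient.mk (compSetoid T) ⟨q, hq⟩ :=
    Quotient.sound (Relation.ReflTransGen.single (Or.inl hpq))
  rw [this]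

lemma zig_lift (c) {u v : ↥T} (huv : ZigzagConnIn T u v)
    (hu : ↑u ∈ comp T c) : ∃ hv : ↑v ∈ comp T c,
      ZigzagConnIn (comp T c) ⟨↑u, hu⟩ ⟨↑v, hv⟩ := by
  induction huv with
  | refl => exact ⟨hu, Relation.ReflTransGen.refl⟩
  | @tail b x hab hbx ih =>
      obtain ⟨hw, z⟩ := ih
      obtain ⟨hbT, hbeq⟩ := hw
      have hx : ↑x ∈ comp T c :=
        ⟨x.2, Eq.trans (Quotient.sound ((compSetoid T).symm
          (Relation.ReflTransGen.single hbx))) hbeq⟩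
      exact ⟨hx, z.tail hbx⟩

lemma comp_interval (hT : IsConvex T) (c) : IsIntervalSet (comp T c) := by
  obtain ⟨a, ha⟩ := Quotient.exists_rep c
  refine ⟨⟨↑a, a.2, ha⟩, comp_convex hT c, ?_⟩
  rintro ⟨x, hx⟩ ⟨y, hy⟩
  obtain ⟨hxT, ex⟩ := hx
  obtain ⟨hyT, ey⟩ := hy
  have hxy : ZigzagConnIn T ⟨x, hxT⟩ ⟨y, hyT⟩ := Quotient.exact (ex.trans ey.symm)
  obtain ⟨hv, z⟩ := zig_lift c hxy ⟨hxT, ex⟩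
  exact z

end IntervalProof

end DecompAux2

section Decomp

open CategoryTheory CategoryTheory.Limits

namespace IntervalProof

variable (k : Type) [Field k] {Q : Type} [PartialOrder Q]

open Classical in
lemma intervalModule_decomposable [Finite Q] (T : Set Q) (hT : IsConvex T) :
    IsIntervalDecomposable k (intervalModule k T hT) := by
  have : Fintype (Quotient (compSetoid T)) := Fintype.ofFinite _
  set n := Fintype.card (Quotient (compSetoid T)) with hn
  set e : Fin n ≃ Quotient (compSetoid T) := (Fintype.equivFin _).symm with he
  refine ⟨n, fun i => intervalModule k (comp T (e i)) (comp_convex hT _),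
    fun i => ⟨_, comp_interval hT _, ⟨Iso.refl _⟩⟩, ⟨?_⟩⟩
  refine ⟨biproduct.lift (fun i => indNat k hT (comp_convex hT _) comp_subset (comp_compat _)),
    biproduct.desc (fun i => indNat' k hT (comp_convex hT _) comp_subset (comp_compat _)),
    ?_, ?_⟩
  · rw [biproduct.lift_desc]
    apply NatTrans.ext
    funext q
    rw [NatTrans.app_sum]
    by_cases hq : q ∈ T
    · refine (Finset.sum_eq_single_of_mem
        (e.symm (Quotient.mk (compSetoid T) ⟨q, hq⟩)) (Finset.mem_univ _) ?_).trans ?_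
      · intro i _ hne
        rw [NatTrans.comp_app]
        apply ModuleCat.hom_ext
        apply LinearMap.ext
        rintro ⟨x, hx⟩
        apply Subtype.ext
        show (if q ∈ T then (1:k) else 0) * ((if q ∈ comp T (e i) then (1:k) else 0) * x) = 0
        have hnmem : q ∉ comp T (e i) := by
          rintro ⟨h', e'⟩
          exact hne ((Equiv.eq_symm_apply e).mpr e'.symm)
        simp [hnmem]
      · rw [NatTrans.comp_app]
        apply ModuleCat.hom_ext
        apply LinearMap.ext
        rintro ⟨x, hx⟩
        apply Subtype.ext
        show (if q ∈ T then (1:k) else 0) *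
          ((if q ∈ comp T (e (e.symm (Quotient.mk (compSetoid T) ⟨q, hq⟩))) then (1:k) else 0)
            * x) = x
        have hmem : q ∈ comp T (Quotient.mk (compSetoid T) ⟨q, hq⟩) := ⟨hq, rfl⟩
        simp [hq, hmem]
    · apply (intervalModule_obj_isZero k hT hq).eq_of_src
  · apply biproduct.hom_ext'
    intro i
    apply biproduct.hom_ext
    intro j
    simp only [biproduct.ι_desc_assoc, Category.assoc, biproduct.lift_π, Category.comp_id,
      biproduct.ι_π]
    by_cases hij : i = j
    · subst hij
      rw [dif_pos rfl, eqToHom_refl]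
      apply NatTrans.ext
      funext q
      apply ModuleCat.hom_ext
      apply LinearMap.ext
      rintro ⟨x, hx⟩
      apply Subtype.ext
      show (if q ∈ comp T (e i) then (1:k) else 0) * ((if q ∈ T then (1:k) else 0) * x) = x
      by_cases hqc : q ∈ comp T (e i)
      · simp [hqc, comp_subset hqc]
      · rw [if_neg hqc] at hx
        simp [(Submodule.mem_bot k).mp hx]
    · rw [dif_neg hij]
      apply NatTrans.ext
      funext q
      apply ModuleCat.hom_ext
      apply LinearMap.ext
      rintro ⟨x, hx⟩
      apply Subtype.ext
      show (if q ∈ comp T (e j) then (1:k) else 0) * ((if q ∈ T then (1:k) else 0) * x) = 0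
      by_cases hqc : q ∈ comp T (e j)
      · have hqi : q ∉ comp T (e i) := by
          rintro ⟨h', e'⟩
          obtain ⟨h'', e''⟩ := hqc
          exact hij (e.injective (e'.symm.trans e''))
        rw [if_neg hqi] at hx
        simp [(Submodule.mem_bot k).mp hx]
      · simp [hqc]

end IntervalProof

end Decomp

section Closure

open CategoryTheory CategoryTheory.Limits

namespace IntervalProof

variable (k : Type) [Field k] {Q : Type} [PartialOrder Q]

lemma isIntervalDecomposable_of_iso {M N : Q ⥤ ModuleCat.{0} k} (e : M ≅ N)
    (h : IsIntervalDecomposable k N) : IsIntervalDecomposable k M := by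
  obtain ⟨n, J, hJ, ⟨e'⟩⟩ := h
  exact ⟨n, J, hJ, ⟨e ≪≫ e'⟩⟩

/-- Flattening of nested biproducts. -/
noncomputable def biproductSigmaIso {n : ℕ} {m : Fin n → ℕ}
    (K : ∀ i : Fin n, Fin (m i) → (Q ⥤ ModuleCat.{0} k)) :
    (⨁ fun i => ⨁ K i) ≅ ⨁ (fun s : Σ i, Fin (m i) => K s.1 s.2) where
  hom := biproduct.desc fun i => biproduct.desc fun j =>
    biproduct.ι (fun s : Σ i, Fin (m i) => K s.1 s.2) ⟨i, j⟩
  inv := biproduct.desc fun s => biproduct.ι (K s.1) s.2 ≫ biproduct.ι (fun i => ⨁ K i) s.1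
  hom_inv_id := by
    apply biproduct.hom_ext'; intro i
    simp only [biproduct.ι_desc_assoc, Category.comp_id]
    apply biproduct.hom_ext'; intro j
    simp [biproduct.ι_desc_assoc, biproduct.ι_desc]
  inv_hom_id := by
    apply biproduct.hom_ext'; rintro ⟨i, j⟩
    simp [biproduct.ι_desc_assoc, biproduct.ι_desc]

lemma isIntervalDecomposable_biproduct {n : ℕ} (N : Fin n → (Q ⥤ ModuleCat.{0} k))
    (h : ∀ i, IsIntervalDecomposable k (N i)) : IsIntervalDecomposable k (⨁ N) := by
  choose m K hK eIso using h
  have e1 : (⨁ N) ≅ ⨁ fun i => ⨁ K i := biproduct.mapIso fun i => (eIso i).some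
  let K' : (Σ i, Fin (m i)) → (Q ⥤ ModuleCat.{0} k) := fun s => K s.1 s.2
  let eq : (Σ i : Fin n, Fin (m i)) ≃ Fin (Fintype.card (Σ i, Fin (m i))) := Fintype.equivFin _
  refine ⟨_, fun t => K' (eq.symm t), fun t => hK _ _, ⟨?_⟩⟩
  exact e1 ≪≫ biproductSigmaIso k K ≪≫ (biproduct.reindex eq.symm K').symm

lemma exact_iff_eval {S : ShortComplex (Q ⥤ ModuleCat.{0} k)} :
    S.Exact ↔ ∀ q : Q, (S.map ((evaluation Q (ModuleCat.{0} k)).obj q)).Exact := by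
  rw [S.exact_iff_isZero_homology, Functor.isZero_iff]
  refine forall_congr' fun q => ?_
  rw [(S.map ((evaluation Q (ModuleCat.{0} k)).obj q)).exact_iff_isZero_homology]
  exact ((S.mapHomologyIso ((evaluation Q (ModuleCat.{0} k)).obj q)).isZero_iff).symm

lemma preimage_convex {Q' : Type} [PartialOrder Q'] {f : Q → Q'} (hf : Monotone f)
    {S : Set Q'} (hS : IsConvex S) : IsConvex (f ⁻¹' S) :=
  fun _ _ _ hx hy hxz hzy => hS hx hy (hf hxz) (hf hzy)

lemma comp_intervalModule {Q' : Type} [PartialOrder Q'] {f : Q → Q'} (hf : Monotone f)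
    (S : Set Q') (hS : IsConvex S) :
    hf.functor ⋙ intervalModule k S hS
      = intervalModule k (f ⁻¹' S) (preimage_convex hf hS) := rfl

end IntervalProof

end Closure

section ExtFunctor

open CategoryTheory CategoryTheory.Limits

namespace IntervalProof

variable (k : Type) [Field k] {P : Type} [PartialOrder P] (P' : Set P) (hconv : IsConvex P')

lemma extHomApp_id (M : ↥P' ⥤ ModuleCat.{0} k) (p : P) :
    extHomApp k P' (𝟙 M) p = 𝟙 (extObj k P' M p) := by
  by_cases hp : p ∈ P'
  · simp [extHomApp, dif_pos hp]
  · exact (extObj_isZero k P' M hp).eq_of_src _ _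

lemma extHomApp_comp {X Y Z : ↥P' ⥤ ModuleCat.{0} k} (f : X ⟶ Y) (g : Y ⟶ Z) (p : P) :
    extHomApp k P' (f ≫ g) p = extHomApp k P' f p ≫ extHomApp k P' g p := by
  by_cases hp : p ∈ P'
  · simp [extHomApp, dif_pos hp]
  · exact (extObj_isZero k P' X hp).eq_of_src _ _

/-- The extension-by-zero functor. -/
noncomputable def extFunctor : (↥P' ⥤ ModuleCat.{0} k) ⥤ (P ⥤ ModuleCat.{0} k) where
  obj := extendByZero k P' hconv
  map := extendByZeroHom k P' hconv
  map_id M := by apply NatTrans.ext; funext p; exact extHomApp_id k P' M p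
  map_comp f g := by apply NatTrans.ext; funext p; exact extHomApp_comp k P' f g p

instance extFunctor_additive : (extFunctor k P' hconv).Additive where
  map_add := by
    intro X Y f g
    apply NatTrans.ext; funext p
    show extHomApp k P' (f + g) p = extHomApp k P' f p + extHomApp k P' g p
    by_cases hp : p ∈ P'
    · simp [extHomApp, dif_pos hp, NatTrans.app_add, Preadditive.comp_add, Preadditive.add_comp]
    · simp [extHomApp, dif_neg hp]

/-- The restriction functor. -/
def restFunctor : (P ⥤ ModuleCat.{0} k) ⥤ (↥P' ⥤ ModuleCat.{0} k) :=
  (Functor.whiskeringLeft ↥P' P (ModuleCat.{0} k)).obj (Subtype.mono_coe (· ∈ P')).functor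

instance restFunctor_additive : (restFunctor k P').Additive where
  map_add := by
    intro X Y f g
    apply NatTrans.ext; funext q
    rfl

lemma zig_image {S : Set ↥P'} : ∀ {u v : ↥S}, ZigzagConnIn S u v →
    ∀ (hu : ↑↑u ∈ (Subtype.val '' S : Set P)) (hv : ↑↑v ∈ (Subtype.val '' S : Set P)),
    ZigzagConnIn (Subtype.val '' S) ⟨↑↑u, hu⟩ ⟨↑↑v, hv⟩ := by
  intro u v h
  induction h with
  | refl => intro hu hv; exact Relation.ReflTransGen.refl
  | @tail b c hab hbc ih =>
      intro hu hv
      have hb : ↑↑b ∈ (Subtype.val '' S : Set P) := ⟨↑b, b.2, rfl⟩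
      exact (ih hu hb).tail
        (hbc.imp (fun h' => Subtype.coe_le_coe.mpr h') (fun h' => Subtype.coe_le_coe.mpr h'))

include hconv in
lemma image_interval {S : Set ↥P'} (hS : IsIntervalSet S) :
    IsIntervalSet (Subtype.val '' S : Set P) := by
  obtain ⟨⟨a, ha⟩, hconvS, hconn⟩ := hS
  refine ⟨⟨↑a, a, ha, rfl⟩, ?_, ?_⟩
  · rintro x y z ⟨x', hx', rfl⟩ ⟨y', hy', rfl⟩ hxz hzy
    have hz : z ∈ P' := hconv x'.2 y'.2 hxz hzy
    exact ⟨⟨z, hz⟩, hconvS hx' hy' hxz hzy, rfl⟩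
  · intro u v
    obtain ⟨x', hx', ex⟩ := u.2
    obtain ⟨y', hy', ey⟩ := v.2
    have hu : u = ⟨↑x', ⟨x', hx', rfl⟩⟩ := Subtype.ext ex.symm
    have hv : v = ⟨↑y', ⟨y', hy', rfl⟩⟩ := Subtype.ext ey.symm
    rw [hu, hv]
    exact zig_image P' (hconn ⟨x', hx'⟩ ⟨y', hy'⟩) _ _

open Classical in
/-- Extension by zero of a module supported in `P'` recovers the module. -/
noncomputable def extRestrictIso (N : P ⥤ ModuleCat.{0} k)
    (hsupp : ∀ p, p ∉ P' → IsZero (N.obj p)) :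
    extendByZero k P' hconv ((Subtype.mono_coe (· ∈ P')).functor ⋙ N) ≅ N :=
  NatIso.ofComponents
    (fun p => if hp : p ∈ P' then eqToIso (extObj_pos k P' _ hp)
      else (extObj_isZero k P' _ hp).iso (hsupp p hp))
    (by
      intro p q f
      by_cases hq : q ∈ P'
      · by_cases hp : p ∈ P'
        · erw [dif_pos hp, dif_pos hq]
          show extMap k P' ((Subtype.mono_coe (· ∈ P')).functor ⋙ N) p q (leOfHom f) ≫
            eqToHom (extObj_pos k P' _ hq) = eqToHom (extObj_pos k P' _ hp) ≫ N.map f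
          have hmap : (extendByZero k P' hconv ((Subtype.mono_coe (· ∈ P')).functor ⋙ N)).map f
              = extMap k P' _ p q (leOfHom f) := rfl
          rw [extMap, dif_pos hp, dif_pos hq]
          have hf : (Subtype.mono_coe (· ∈ P')).functor.map
              (homOfLE (show (⟨p, hp⟩ : ↥P') ≤ ⟨q, hq⟩ from leOfHom f)) = f :=
            Subsingleton.elim _ _
          simp [Functor.comp_map, hf]
          erw [eqToHom_trans]
          rfl
        · exact ((extObj_isZero k P' _ hp).eq_of_src _ _)
      · exact ((hsupp q hq).eq_of_tgt _ _))

lemma image_subset_P' {S : Set ↥P'} : (Subtype.val '' S : Set P) ⊆ P' := by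
  rintro p ⟨x, _, rfl⟩; exact x.2

/-- Extension by zero of an interval module is an interval module. -/
noncomputable def extIntervalIso (S : Set ↥P') (hSc : IsConvex S)
    (hS'c : IsConvex (Subtype.val '' S : Set P)) :
    extendByZero k P' hconv (intervalModule k S hSc)
      ≅ intervalModule k (Subtype.val '' S : Set P) hS'c :=
  (eqToIso (congrArg (extendByZero k P' hconv)
    (((comp_intervalModule k (Subtype.mono_coe (· ∈ P')) _ hS'c).trans
      (intervalModule_congr k (Set.preimage_image_eq S Subtype.val_injective) _ hSc)).symm)))
    ≪≫ extRestrictIso k P' hconv (intervalModule k _ hS'c)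
      (fun p hp => intervalModule_obj_isZero k hS'c (fun hmem => hp (image_subset_P' P' hmem)))

end IntervalProof

end ExtFunctor

section Directions

open CategoryTheory CategoryTheory.Limits

namespace IntervalProof

variable (k : Type) [Field k] {P : Type} [PartialOrder P] [Finite P]
  (P' : Set P) (hconv : IsConvex P')

lemma ext_isZero {M : ↥P' ⥤ ModuleCat.{0} k} (h : IsZero M) :
    IsZero (extendByZero k P' hconv M) := by
  rw [Functor.isZero_iff] at h ⊢
  intro p
  by_cases hp : p ∈ P'
  · rw [show (extendByZero k P' hconv M).obj p = M.obj ⟨p, hp⟩ from extObj_pos k P' M hp]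
    exact h _
  · exact extObj_isZero k P' M hp

lemma ext_decomposable {M : ↥P' ⥤ ModuleCat.{0} k} (h : IsIntervalDecomposable k M) :
    IsIntervalDecomposable k (extendByZero k P' hconv M) := by
  obtain ⟨n, J, hJ, ⟨e⟩⟩ := h
  refine ⟨n, fun i => extendByZero k P' hconv (J i), fun i => ?_,
    ⟨(extFunctor k P' hconv).mapIso e ≪≫ (extFunctor k P' hconv).mapBiproduct J⟩⟩
  obtain ⟨S, hS, ⟨eS⟩⟩ := hJ i
  exact ⟨Subtype.val '' S, image_interval P' hconv hS,
    ⟨(extFunctor k P' hconv).mapIso eS ≪≫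
      extIntervalIso k P' hconv S hS.2.1 (image_interval P' hconv hS).2.1⟩⟩

lemma rest_decomposable {N : P ⥤ ModuleCat.{0} k} (h : IsIntervalDecomposable k N) :
    IsIntervalDecomposable k ((restFunctor k P').obj N) := by
  obtain ⟨n, J, hJ, ⟨e⟩⟩ := h
  have hi : ∀ i, IsIntervalDecomposable k ((restFunctor k P').obj (J i)) := by
    intro i
    obtain ⟨S, hS, ⟨eS⟩⟩ := hJ i
    refine isIntervalDecomposable_of_iso k ((restFunctor k P').mapIso eS ≪≫
      eqToIso (comp_intervalModule k (Subtype.mono_coe (· ∈ P')) S hS.2.1)) ?_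
    exact intervalModule_decomposable k _ (preimage_convex (Subtype.mono_coe (· ∈ P')) hS.2.1)
  exact isIntervalDecomposable_of_iso k
    ((restFunctor k P').mapIso e ≪≫ (restFunctor k P').mapBiproduct J)
    (isIntervalDecomposable_biproduct k _ hi)

/-- Restriction of the extension by zero recovers the module. -/
noncomputable def restExtIso (M : ↥P' ⥤ ModuleCat.{0} k) :
    (restFunctor k P').obj (extendByZero k P' hconv M) ≅ M :=
  NatIso.ofComponents (fun q => eqToIso (extObj_pos k P' M q.2)) (by
    intro a b f
    show extMap k P' M ↑a ↑b (Subtype.coe_le_coe.mpr (leOfHom f)) ≫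
      eqToHom (extObj_pos k P' M b.2) = eqToHom (extObj_pos k P' M a.2) ≫ M.map f
    have hmap : ((restFunctor k P').obj (extendByZero k P' hconv M)).map f
        = extMap k P' M ↑a ↑b (Subtype.coe_le_coe.mpr (leOfHom f)) := rfl
    rw [extMap, dif_pos a.2, dif_pos b.2]
    have hf : M.map (homOfLE (show (⟨↑a, a.2⟩ : ↥P') ≤ ⟨↑b, b.2⟩ from
        Subtype.coe_le_coe.mpr (leOfHom f))) = M.map f := by
      congr 1
    simp [hf])

lemma dir1 (M : ↥P' ⥤ ModuleCat.{0} k) (n : ℕ)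
    (h : HasResolutionOfLength (IsIntervalDecomposable k) n M) :
    HasResolutionOfLength (IsIntervalDecomposable k) n (extendByZero k P' hconv M) := by
  obtain ⟨J, d, f, w0, w, hJ, hz, hepi, hex0, hex⟩ := h
  have hw0 : extendByZeroHom k P' hconv (d 0) ≫ extendByZeroHom k P' hconv f = 0 := by
    have : extendByZeroHom k P' hconv (d 0) ≫ extendByZeroHom k P' hconv f
        = (extFunctor k P' hconv).map (d 0 ≫ f) :=
      ((extFunctor k P' hconv).map_comp _ _).symm
    rw [this, w0, Functor.map_zero]; rfl
  have hw : ∀ i, extendByZeroHom k P' hconv (d (i + 1)) ≫ extendByZeroHom k P' hconv (d i)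
      = 0 := by
    intro i
    have : extendByZeroHom k P' hconv (d (i + 1)) ≫ extendByZeroHom k P' hconv (d i)
        = (extFunctor k P' hconv).map (d (i + 1) ≫ d i) :=
      ((extFunctor k P' hconv).map_comp _ _).symm
    rw [this, w i, Functor.map_zero]; rfl
  refine ⟨fun i => extendByZero k P' hconv (J i),
    fun i => extendByZeroHom k P' hconv (d i), extendByZeroHom k P' hconv f,
    hw0, hw, fun i hi => ext_decomposable k P' hconv (hJ i hi),
    fun i hi => ext_isZero k P' hconv (hz i hi), ?_, ?_, fun i => ?_⟩
  · rw [NatTrans.epi_iff_epi_app]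
    intro p
    by_cases hp : p ∈ P'
    · haveI : Epi (f.app ⟨p, hp⟩) := (NatTrans.epi_iff_epi_app f).mp hepi ⟨p, hp⟩
      have : (extendByZeroHom k P' hconv f).app p
          = eqToHom (extObj_pos k P' (J 0) hp) ≫ f.app ⟨p, hp⟩ ≫
            eqToHom (extObj_pos k P' M hp).symm := by
        show extHomApp k P' f p = _
        rw [extHomApp, dif_pos hp]
      rw [this]
      haveI : Epi (eqToHom (extObj_pos k P' (J 0) hp) ≫ f.app ⟨p, hp⟩ ≫
          eqToHom (extObj_pos k P' M hp).symm) := inferInstance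
      exact this
    · exact epi_of_target_iso_zero _ ((extObj_isZero k P' M hp).isoZero)
  · rw [exact_iff_eval k]
    intro p
    by_cases hp : p ∈ P'
    · refine ShortComplex.exact_of_iso ?_ ((exact_iff_eval k).mp hex0 ⟨p, hp⟩)
      refine ShortComplex.isoMk
        (eqToIso (extObj_pos k P' (J (0 + 1)) hp).symm)
        (eqToIso (extObj_pos k P' (J 0) hp).symm)
        (eqToIso (extObj_pos k P' M hp).symm) ?_ ?_
      · simp [extendByZeroHom, extHomApp, hp]
        show eqToHom (extObj_pos k P' (J (0 + 1)) hp).symm ≫ eqToHom (extObj_pos k P' (J (0 + 1)) hp) ≫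
          _ ≫ eqToHom (extObj_pos k P' (J 0) hp).symm = _ ≫ eqToHom (extObj_pos k P' (J 0) hp).symm
        simp
      · simp [extendByZeroHom, extHomApp, hp]
        show eqToHom (extObj_pos k P' (J 0) hp).symm ≫ eqToHom (extObj_pos k P' (J 0) hp) ≫ _ ≫
          eqToHom (extObj_pos k P' M hp).symm = _ ≫ eqToHom (extObj_pos k P' M hp).symm
        simp
    · exact ShortComplex.exact_of_isZero_X₂ _ (extObj_isZero k P' (J 0) hp)
  · rw [exact_iff_eval k]
    intro p
    by_cases hp : p ∈ P'
    · refine ShortComplex.exact_of_iso ?_ ((exact_iff_eval k).mp (hex i) ⟨p, hp⟩)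
      refine ShortComplex.isoMk
        (eqToIso (extObj_pos k P' (J (i + 1 + 1)) hp).symm)
        (eqToIso (extObj_pos k P' (J (i + 1)) hp).symm)
        (eqToIso (extObj_pos k P' (J i) hp).symm) ?_ ?_
      · simp [extendByZeroHom, extHomApp, hp]
        show eqToHom (extObj_pos k P' (J (i + 1 + 1)) hp).symm ≫ eqToHom (extObj_pos k P' (J (i + 1 + 1)) hp) ≫
          _ ≫ eqToHom (extObj_pos k P' (J (i + 1)) hp).symm = _ ≫ eqToHom (extObj_pos k P' (J (i + 1)) hp).symm
        simp
      · simp [extendByZeroHom, extHomApp, hp]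
        show eqToHom (extObj_pos k P' (J (i + 1)) hp).symm ≫ eqToHom (extObj_pos k P' (J (i + 1)) hp) ≫
          _ ≫ eqToHom (extObj_pos k P' (J (i)) hp).symm = _ ≫ eqToHom (extObj_pos k P' (J (i)) hp).symm
        simp
    · exact ShortComplex.exact_of_isZero_X₂ _ (extObj_isZero k P' (J (i + 1)) hp)

lemma dir2 (M : ↥P' ⥤ ModuleCat.{0} k) (n : ℕ)
    (h : HasResolutionOfLength (IsIntervalDecomposable k) n
      (extendByZero k P' hconv M)) :
    HasResolutionOfLength (IsIntervalDecomposable k) n M := by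
  obtain ⟨J, d, f, w0, w, hJ, hz, hepi, hex0, hex⟩ := h
  refine ⟨fun i => (restFunctor k P').obj (J i), fun i => (restFunctor k P').map (d i),
    (restFunctor k P').map f ≫ (restExtIso k P' hconv M).hom, ?_, fun i => ?_,
    fun i hi => rest_decomposable k P' (hJ i hi), fun i hi => ?_, ?_, ?_, fun i => ?_⟩
  · rw [← Category.assoc, ← Functor.map_comp, w0, Functor.map_zero, zero_comp]
  · rw [← Functor.map_comp, w i, Functor.map_zero]
  · have hzi := (Functor.isZero_iff _).mp (hz i hi)
    exact (Functor.isZero_iff _).mpr (fun q => hzi ↑q)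
  · rw [NatTrans.epi_iff_epi_app]
    intro q
    haveI : Epi (f.app ↑q) := (NatTrans.epi_iff_epi_app f).mp hepi ↑q
    rw [NatTrans.comp_app]
    haveI : Epi (((restFunctor k P').map f).app q) := by
      show Epi (f.app ↑q); infer_instance
    exact epi_comp _ _
  · rw [exact_iff_eval k]
    intro q
    refine ShortComplex.exact_of_iso ?_ ((exact_iff_eval k).mp hex0 ↑q)
    refine ShortComplex.isoMk (Iso.refl _) (Iso.refl _)
      (eqToIso (extObj_pos k P' M q.2)) ?_ ?_
    · simp [restFunctor]
      exact (Category.id_comp _).trans (Category.comp_id _).symm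
    · simp [restFunctor, restExtIso]
      exact Category.id_comp _
  · rw [exact_iff_eval k]
    intro q
    refine ShortComplex.exact_of_iso ?_ ((exact_iff_eval k).mp (hex i) ↑q)
    refine ShortComplex.isoMk (Iso.refl _) (Iso.refl _) (Iso.refl _) ?_ ?_
    · simp [restFunctor]
      exact (Category.id_comp _).trans (Category.comp_id _).symm
    · simp [restFunctor]
      exact (Category.id_comp _).trans (Category.comp_id _).symm

end IntervalProof

end Directions

/-- For a convex full subposet `P'` of `P` and a persistence module `M` over
`P'`, `M` admits an interval resolution of length `n` over `P'` if and only if its extension by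
zero admits one of length `n` over `P`; consequently the interval resolution dimensions
agree. -/
theorem intervalResolution_extendByZero
    (k : Type) [Field k] (P : Type) [PartialOrder P] [Finite P]
    (P' : Set P) (hconv : IsConvex P')
    (M : ↥P' ⥤ ModuleCat.{0} k) (hM : PointwiseFinite k M) :
    (∀ n : ℕ, HasResolutionOfLength (IsIntervalDecomposable k) n M ↔
      HasResolutionOfLength (IsIntervalDecomposable k) n (extendByZero k P' hconv M)) ∧
    sInf {n : ℕ | HasResolutionOfLength (IsIntervalDecomposable k) n M} =
      sInf {n : ℕ |
        HasResolutionOfLength (IsIntervalDecomposable k) n (extendByZero k P' hconv M)} := by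
  have hiff : ∀ n : ℕ, HasResolutionOfLength (IsIntervalDecomposable k) n M ↔
      HasResolutionOfLength (IsIntervalDecomposable k) n (extendByZero k P' hconv M) :=
    fun n => ⟨IntervalProof.dir1 k P' hconv M n, IntervalProof.dir2 k P' hconv M n⟩
  refine ⟨hiff, ?_⟩
  have hset : {n : ℕ | HasResolutionOfLength (IsIntervalDecomposable k) n M}
      = {n : ℕ | HasResolutionOfLength (IsIntervalDecomposable k) n
          (extendByZero k P' hconv M)} := Set.ext hiff
  rw [hset]
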